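/- For every positive integer n, (n+1)^{n-1} = Σ_b (n!/2^n) · Π_{v ∈ V(b)} (1 + 1/h(v)), where the sum is over all unlabeled binary trees b on n vertices and h(v) denotes the number of descendants of v in b (including v itself). -/

import Mathlib

/-- Unlabeled binary trees: each vertex has an (optional) left and right subtree.
`nil` is the empty tree. -/
inductive UBT : Type
  | nil : UBT
  | node : UBT → UBT → UBT
deriving DecidableEq

/-- Number of vertices of an unlabeled binary tree. -/
def UBT.size : UBT → ℕ
  | .nil => 0
  | .node l r => l.size + r.size + 1

/-- The vertex set of an unlabeled binary tree, encoded as root-to-vertex paths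
(`false` = step to the left child, `true` = step to the right child). -/
def UBT.verts : UBT → Finset (List Bool)
  | .nil => ∅
  | .node l r => insert [] ((l.verts.image (List.cons false)) ∪ (r.verts.image (List.cons true)))

/-- The descendant subtree at a given position, so for a vertex `v` of `b`,
`h(v) = ((b.sub v).size`, the number of descendants of `v` (including `v`). -/
def UBT.sub : UBT → List Bool → UBT
  | t, [] => t
  | .nil, _ => .nil
  | .node l r, b :: p => if b then r.sub p else l.sub p

/-- The (finite) set of all unlabeled binary trees on `n` vertices. -/
def treesOfSize : ℕ → Finset UBT
  | 0 => {UBT.nil}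
  | n + 1 =>
      (Finset.range (n + 1)).attach.biUnion fun i =>
        ((treesOfSize i.1) ×ˢ (treesOfSize (n - i.1))).image fun p => UBT.node p.1 p.2
decreasing_by
  all_goals (have := i.2; simp only [Finset.mem_range] at this; omega)


open Finset

lemma UBT.sub_nil' (t : UBT) : t.sub [] = t := by cases t <;> rfl

lemma UBT.sub_cons_false (l r : UBT) (p : List Bool) :
    (UBT.node l r).sub (false :: p) = l.sub p := by simp [UBT.sub]

lemma UBT.sub_cons_true (l r : UBT) (p : List Bool) :
    (UBT.node l r).sub (true :: p) = r.sub p := by simp [UBT.sub]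

lemma size_of_mem_treesOfSize : ∀ n : ℕ, ∀ b ∈ treesOfSize n, b.size = n := by
  intro n
  induction n using Nat.strong_induction_on with
  | _ n ih =>
    intro b hb
    match n with
    | 0 =>
      rw [treesOfSize] at hb
      simp at hb
      subst hb
      rfl
    | n + 1 =>
      rw [treesOfSize] at hb
      simp only [Finset.mem_biUnion, Finset.mem_image, Finset.mem_product, Finset.mem_attach,
        true_and] at hb
      obtain ⟨i, ⟨p, ⟨hp1, hp2⟩, rfl⟩⟩ := hb
      have hi := i.2
      simp only [Finset.mem_range] at hi
      have h1 := ih i.1 (by omega) p.1 hp1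
      have h2 := ih (n - i.1) (by omega) p.2 hp2
      show p.1.size + p.2.size + 1 = n + 1
      omega

noncomputable def Pw (b : UBT) : ℚ := ∏ v ∈ b.verts, (1 + 1 / ((b.sub v).size : ℚ))

lemma Pw_nil : Pw UBT.nil = 1 := by simp [Pw, UBT.verts]

lemma Pw_node (l r : UBT) :
    Pw (UBT.node l r) = (1 + 1 / ((l.size + r.size + 1 : ℕ) : ℚ)) * (Pw l * Pw r) := by
  unfold Pw
  rw [show (UBT.node l r).verts
    = insert [] ((l.verts.image (List.cons false)) ∪ (r.verts.image (List.cons true))) from rfl]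
  have hnotmem : ([] : List Bool) ∉ (l.verts.image (List.cons false)) ∪ (r.verts.image (List.cons true)) := by
    simp
  rw [Finset.prod_insert hnotmem]
  have hdisj : Disjoint (l.verts.image (List.cons false)) (r.verts.image (List.cons true)) := by
    rw [Finset.disjoint_left]
    rintro x hx hy
    simp only [Finset.mem_image] at hx hy
    obtain ⟨a, _, rfl⟩ := hx
    obtain ⟨b, _, hb⟩ := hy
    simp at hb
  have h1 : ∏ p ∈ l.verts, (1 + 1 / (((UBT.node l r).sub (false :: p)).size : ℚ)) = Pw l :=
    Finset.prod_congr rfl fun p _ ↦ by rw [UBT.sub_cons_false]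
  have h2 : ∏ p ∈ r.verts, (1 + 1 / (((UBT.node l r).sub (true :: p)).size : ℚ)) = Pw r :=
    Finset.prod_congr rfl fun p _ ↦ by rw [UBT.sub_cons_true]
  rw [Finset.prod_union hdisj,
    Finset.prod_image (fun a _ b _ h ↦ List.cons_injective h),
    Finset.prod_image (fun a _ b _ h ↦ List.cons_injective h),
    h1, h2, UBT.sub_nil']
  rfl

noncomputable def Tt (n : ℕ) : ℚ := ∑ b ∈ treesOfSize n, Pw b

lemma Tt_zero : Tt 0 = 1 := by
  rw [Tt, treesOfSize]
  simp [Pw_nil]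

lemma Tt_succ (n : ℕ) :
    Tt (n + 1) = (1 + 1 / ((n + 1 : ℕ) : ℚ)) * ∑ i ∈ range (n + 1), Tt i * Tt (n - i) := by
  rw [Tt, treesOfSize]
  rw [Finset.sum_biUnion ?hdisj]
  case hdisj =>
    intro i _ j _ hij
    rw [Function.onFun, Finset.disjoint_left]
    rintro x hx hy
    simp only [Finset.mem_image, Finset.mem_product] at hx hy
    obtain ⟨p, ⟨hp1, _⟩, rfl⟩ := hx
    obtain ⟨q, ⟨hq1, _⟩, hq⟩ := hy
    have h1 := size_of_mem_treesOfSize _ _ hp1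
    have h2 := size_of_mem_treesOfSize _ _ hq1
    injection hq with e1 e2
    rw [e1] at h2
    exact hij (Subtype.ext (by omega))
  have hinner : ∀ i ∈ (range (n + 1)).attach,
      (∑ b ∈ (((treesOfSize i.1) ×ˢ (treesOfSize (n - i.1))).image fun p => UBT.node p.1 p.2),
        Pw b)
      = (1 + 1 / ((n + 1 : ℕ) : ℚ)) * (Tt i.1 * Tt (n - i.1)) := by
    intro i _
    have hi := i.2
    simp only [Finset.mem_range] at hi
    rw [Finset.sum_image (by
      rintro ⟨a1, a2⟩ _ ⟨b1, b2⟩ _ h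
      injection h with e1 e2
      exact Prod.ext e1 e2)]
    rw [Finset.sum_product]
    have hterm : ∀ l ∈ treesOfSize i.1, ∀ r ∈ treesOfSize (n - i.1),
        Pw (UBT.node l r) = (1 + 1 / ((n + 1 : ℕ) : ℚ)) * (Pw l * Pw r) := by
      intro l hl r hr
      rw [Pw_node]
      rw [size_of_mem_treesOfSize _ _ hl, size_of_mem_treesOfSize _ _ hr]
      rw [show i.1 + (n - i.1) + 1 = n + 1 by omega]
    calc ∑ l ∈ treesOfSize i.1, ∑ r ∈ treesOfSize (n - i.1), Pw (UBT.node l r)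
        = ∑ l ∈ treesOfSize i.1, ∑ r ∈ treesOfSize (n - i.1),
            (1 + 1 / ((n + 1 : ℕ) : ℚ)) * (Pw l * Pw r) := by
          refine Finset.sum_congr rfl fun l hl ↦ Finset.sum_congr rfl fun r hr ↦ ?_
          exact hterm l hl r hr
      _ = (1 + 1 / ((n + 1 : ℕ) : ℚ)) * (Tt i.1 * Tt (n - i.1)) := by
          simp only [Tt, Finset.sum_mul_sum, Finset.mul_sum]
          rw [Finset.sum_comm]
          refine Finset.sum_congr rfl fun r _ ↦ ?_
          conv_rhs => rw [Finset.sum_mul, Finset.mul_sum]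
  rw [Finset.sum_congr rfl hinner, ← Finset.mul_sum]
  congr 1
  exact Finset.sum_attach (range (n + 1)) (fun j => Tt j * Tt (n - j))


open Polynomial

lemma iter_fwdDiff_pow (c : ℚ) : ∀ n m : ℕ, n < m →
    (fwdDiff 1)^[m] (fun x : ℚ ↦ (x + c) ^ n) = 0 := by
  intro n
  induction n using Nat.strong_induction_on with
  | _ n ih =>
    intro m hm
    obtain ⟨m', rfl⟩ : ∃ m', m = m' + 1 := ⟨m - 1, by omega⟩
    rw [Function.iterate_succ_apply]
    have hstep : (fwdDiff 1) (fun x : ℚ ↦ (x + c) ^ n)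
        = ∑ j ∈ range n, (n.choose j : ℚ) • (fun x : ℚ ↦ (x + c) ^ j) := by
      funext x
      have hb : (x + c + 1) ^ n = ∑ j ∈ range (n + 1), (x + c) ^ j * (n.choose j : ℚ) := by
        simpa using add_pow (x + c) 1 n
      have : fwdDiff 1 (fun x : ℚ ↦ (x + c) ^ n) x = (x + c + 1) ^ n - (x + c) ^ n := by
        simp [fwdDiff]; ring_nf
      rw [this, hb, sum_range_succ]
      simp only [Nat.choose_self, Nat.cast_one, mul_one, add_sub_cancel_right,
        Finset.sum_apply, Pi.smul_apply, smul_eq_mul]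
      exact Finset.sum_congr rfl fun j _ ↦ mul_comm _ _
    rw [hstep, fwdDiff_iter_finset_sum]
    refine Finset.sum_eq_zero fun j hj ↦ ?_
    have hj' := mem_range.mp hj
    rw [fwdDiff_iter_const_smul, ih j hj' m' (by omega)]
    simp

lemma alt_sum_pow (n m : ℕ) (h : n < m) :
    ∑ k ∈ range (m + 1), (-1 : ℚ) ^ (m - k) * (m.choose k : ℚ) * ((k : ℚ) + 1) ^ n = 0 := by
  have H := fwdDiff_iter_eq_sum_shift (1 : ℚ) (fun x : ℚ ↦ (x + 1) ^ n) m 0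
  rw [iter_fwdDiff_pow 1 n m h] at H
  simp only [Pi.zero_apply, zero_add, smul_eq_mul, zsmul_eq_mul] at H
  rw [eq_comm] at H
  convert H using 2 with k hk
  push_cast
  ring

noncomputable def AbP (n : ℕ) : ℚ[X] :=
  ∑ k ∈ range (n + 1),
    C ((n.choose k : ℚ) * ((k : ℚ) + 1) ^ (k - 1)) * (X + C ((n - k : ℕ) : ℚ)) ^ (n - k)

lemma abel_poly : ∀ n : ℕ, AbP n = (X + C ((n : ℚ) + 1)) ^ n := by
  intro n
  induction n with
  | zero => simp [AbP]
  | succ n ih =>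
    have hcomp : (AbP n).comp (X + 1) =
        ∑ k ∈ range (n + 1),
          C ((n.choose k : ℚ) * ((k : ℚ) + 1) ^ (k - 1)) *
            (X + C ((n + 1 - k : ℕ) : ℚ)) ^ (n - k) := by
      unfold AbP
      rw [Polynomial.sum_comp]
      refine Finset.sum_congr rfl fun k hk ↦ ?_
      have hk' := mem_range.mp hk
      rw [Polynomial.mul_comp, Polynomial.C_comp, Polynomial.pow_comp, Polynomial.add_comp,
        Polynomial.X_comp, Polynomial.C_comp]
      congr 2
      have h1 : ((n + 1 - k : ℕ) : ℚ) = ((n - k : ℕ) : ℚ) + 1 := by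
        have : n + 1 - k = (n - k) + 1 := by omega
        rw [this]; push_cast; ring
      rw [h1, C_add, C_1]; ring
    have hIH : (AbP n).comp (X + 1) = (X + C ((n : ℚ) + 2)) ^ n := by
      rw [ih, Polynomial.pow_comp, Polynomial.add_comp, Polynomial.X_comp, Polynomial.C_comp]
      congr 1
      simp only [C_add, map_ofNat, C_1]
      ring
    have hder : derivative (AbP (n + 1)) = derivative ((X + C ((n : ℚ) + 2)) ^ (n + 1)) := by
      rw [derivative_pow]
      rw [show derivative (X + C ((n : ℚ) + 2)) = 1 by simp]
      unfold AbP
      rw [derivative_sum, Finset.sum_range_succ]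
      rw [show (n + 1 - (n + 1) : ℕ) = 0 from Nat.sub_self _]
      rw [pow_zero, mul_one, derivative_C, add_zero]
      have hterm : ∀ k ∈ range (n + 1),
          derivative (C (((n+1).choose k : ℚ) * ((k : ℚ) + 1) ^ (k - 1)) *
            (X + C ((n + 1 - k : ℕ) : ℚ)) ^ (n + 1 - k))
          = C ((n : ℚ) + 1) * (C ((n.choose k : ℚ) * ((k : ℚ) + 1) ^ (k - 1)) *
              (X + C ((n + 1 - k : ℕ) : ℚ)) ^ (n - k)) := by
        intro k hk
        have hk' := mem_range.mp hk
        rw [derivative_C_mul, derivative_pow]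
        rw [show derivative (X + C ((n + 1 - k : ℕ) : ℚ)) = 1 by simp]
        rw [mul_one, show (n + 1 - k - 1 : ℕ) = n - k by omega, ← mul_assoc, ← C_mul]
        have hnat : (n + 1).choose k * (n + 1 - k) = (n + 1) * n.choose k := by
          rw [← Nat.choose_mul_succ_eq n k]; ring
        have : (((n+1).choose k : ℚ)) * ((n + 1 - k : ℕ) : ℚ) = ((n : ℚ) + 1) * (n.choose k : ℚ) := by
          have := congrArg (fun t : ℕ => (t : ℚ)) hnat
          push_cast at this
          convert this using 2 <;> push_cast <;> ring
        have hc : ((n+1).choose k : ℚ) * (((k : ℚ) + 1) ^ (k - 1)) * ((n + 1 - k : ℕ) : ℚ)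
            = ((n : ℚ) + 1) * ((n.choose k : ℚ) * ((k : ℚ) + 1) ^ (k - 1)) := by
          calc ((n+1).choose k : ℚ) * (((k : ℚ) + 1) ^ (k - 1)) * ((n + 1 - k : ℕ) : ℚ)
              = (((n+1).choose k : ℚ) * ((n + 1 - k : ℕ) : ℚ)) * ((k : ℚ) + 1) ^ (k - 1) := by ring
            _ = ((n : ℚ) + 1) * ((n.choose k : ℚ) * ((k : ℚ) + 1) ^ (k - 1)) := by rw [this]; ring
        rw [hc, C_mul, mul_assoc]
      rw [Finset.sum_congr rfl hterm, ← Finset.mul_sum, ← hcomp, hIH]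
      push_cast
      ring
    have key : derivative (AbP (n + 1) - (X + C ((n : ℚ) + 2)) ^ (n + 1)) = 0 := by
      rw [derivative_sub, hder, sub_self]
    have hC := eq_C_of_derivative_eq_zero key
    set y0 : ℚ := -((n : ℚ) + 2) with hy0
    have hevalQ : eval y0 ((X + C ((n : ℚ) + 2)) ^ (n + 1)) = 0 := by
      have hz : y0 + ((n : ℚ) + 2) = 0 := by rw [hy0]; ring
      rw [eval_pow, eval_add, eval_X, eval_C, hz, zero_pow (by omega)]
    have hevalP : eval y0 (AbP (n + 1)) = 0 := by
      unfold AbP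
      rw [eval_finset_sum]
      have : ∀ k ∈ range (n + 1 + 1),
          eval y0 (C (((n+1).choose k : ℚ) * ((k : ℚ) + 1) ^ (k - 1)) *
            (X + C ((n + 1 - k : ℕ) : ℚ)) ^ (n + 1 - k))
          = (-1 : ℚ) ^ (n + 1 - k) * ((n+1).choose k : ℚ) * ((k : ℚ) + 1) ^ n := by
        intro k hk
        have hk' := mem_range.mp hk
        rw [eval_mul, eval_C, eval_pow, eval_add, eval_X, eval_C]
        have h2 : y0 + ((n + 1 - k : ℕ) : ℚ) = -(((k : ℚ) + 1)) := by
          rw [hy0, Nat.cast_sub (by omega)]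
          push_cast
          ring
        rw [h2, neg_pow]
        have h3 : ((k : ℚ) + 1) ^ (k - 1) * ((k : ℚ) + 1) ^ (n + 1 - k) = ((k : ℚ) + 1) ^ n := by
          rcases Nat.eq_zero_or_pos k with hk0 | hk0
          · subst hk0; norm_num
          · rw [← pow_add, show k - 1 + (n + 1 - k) = n by omega]
        calc ((n+1).choose k : ℚ) * ((k : ℚ) + 1) ^ (k - 1) *
              ((-1 : ℚ) ^ (n + 1 - k) * ((k : ℚ) + 1) ^ (n + 1 - k))
            = (-1 : ℚ) ^ (n + 1 - k) * ((n+1).choose k : ℚ) *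
                (((k : ℚ) + 1) ^ (k - 1) * ((k : ℚ) + 1) ^ (n + 1 - k)) := by ring
          _ = _ := by rw [h3]
      rw [Finset.sum_congr rfl this]
      exact alt_sum_pow n (n + 1) (by omega)
    have : AbP (n + 1) - (X + C ((n : ℚ) + 2)) ^ (n + 1) = 0 := by
      rw [hC]
      have := congrArg (eval y0) hC
      rw [eval_sub, hevalP, hevalQ, eval_C] at this
      rw [← this]
      simp
    have := sub_eq_zero.mp this
    rw [this]
    push_cast
    ring_nf

lemma abel_eval (n : ℕ) (y : ℚ) :
    ∑ k ∈ range (n + 1), (n.choose k : ℚ) * ((k : ℚ) + 1) ^ (k - 1) * (y + ((n - k : ℕ) : ℚ)) ^ (n - k)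
      = (y + ((n : ℚ) + 1)) ^ n := by
  have := congrArg (eval y) (abel_poly n)
  unfold AbP at this
  rw [eval_finset_sum, eval_pow, eval_add, eval_X, eval_C] at this
  rw [← this]
  refine Finset.sum_congr rfl fun k hk ↦ ?_
  rw [eval_mul, eval_C, eval_pow, eval_add, eval_X, eval_C]

/-- `S k = (k+1)^(k-1)`. -/
noncomputable def Sfun (k : ℕ) : ℚ := ((k : ℚ) + 1) ^ (k - 1)

lemma pascal_split (m : ℕ) (a : ℕ → ℚ) :
    ∑ k ∈ range (m + 2), ((m+1).choose k : ℚ) * a k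
      = ∑ k ∈ range (m + 1), (m.choose k : ℚ) * a k
        + ∑ k ∈ range (m + 1), (m.choose k : ℚ) * a (k + 1) := by
  rw [Finset.sum_range_succ' (fun k ↦ ((m+1).choose k : ℚ) * a k) (m + 1)]
  have h1 : ∀ k ∈ range (m + 1), ((m+1).choose (k+1) : ℚ) * a (k+1)
      = (m.choose k : ℚ) * a (k+1) + (m.choose (k+1) : ℚ) * a (k+1) := by
    intro k _
    rw [Nat.choose_succ_succ]
    push_cast
    ring
  rw [Finset.sum_congr rfl h1, Finset.sum_add_distrib]
  have h2 : ∑ k ∈ range (m + 1), (m.choose (k+1) : ℚ) * a (k+1)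
      + ((m+1).choose 0 : ℚ) * a 0 = ∑ k ∈ range (m + 1), (m.choose k : ℚ) * a k := by
    rw [show (((m+1).choose 0 : ℕ) : ℚ) = ((m.choose 0 : ℕ) : ℚ) by simp]
    rw [← Finset.sum_range_succ' (fun k ↦ (m.choose k : ℚ) * a k) (m + 1)]
    rw [Finset.sum_range_succ]
    simp [Nat.choose_succ_self]
  rw [add_assoc, h2]
  ring

lemma conv_abel (m : ℕ) :
    ∑ k ∈ range (m + 2), ((m+1).choose k : ℚ) * (Sfun k * Sfun (m + 1 - k))
      = 2 * ((m : ℚ) + 3) ^ m := by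
  have base : ∑ k ∈ range (m + 1), (m.choose k : ℚ) * (Sfun k * Sfun (m + 1 - k))
      = ((m : ℚ) + 3) ^ m := by
    have h := abel_eval m 2
    rw [show (2 + ((m : ℚ) + 1)) = (m : ℚ) + 3 by ring] at h
    rw [← h]
    refine Finset.sum_congr rfl fun k hk ↦ ?_
    have hk' := mem_range.mp hk
    have e1 : Sfun (m + 1 - k) = (2 + ((m - k : ℕ) : ℚ)) ^ (m - k) := by
      unfold Sfun
      have h2 : ((m + 1 - k : ℕ) : ℚ) + 1 = 2 + ((m - k : ℕ) : ℚ) := by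
        rw [show (m + 1 - k : ℕ) = (m - k) + 1 by omega]
        push_cast
        ring
      rw [h2, show (m + 1 - k - 1 : ℕ) = m - k by omega]
    rw [e1]
    unfold Sfun
    ring
  have hrefl : ∑ k ∈ range (m + 1), (m.choose k : ℚ) * (Sfun (k + 1) * Sfun (m + 1 - (k + 1)))
      = ∑ k ∈ range (m + 1), (m.choose k : ℚ) * (Sfun k * Sfun (m + 1 - k)) := by
    rw [← Finset.sum_range_reflect]
    refine Finset.sum_congr rfl fun k hk ↦ ?_
    have hk' := mem_range.mp hk
    rw [show m + 1 - 1 - k = m - k by omega, show m + 1 - (m - k + 1) = k by omega,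
      show m - k + 1 = m + 1 - k by omega, Nat.choose_symm (by omega)]
    ring
  rw [pascal_split m (fun k ↦ Sfun k * Sfun (m + 1 - k)), hrefl, base]
  ring


lemma Tt_eq : ∀ n : ℕ, Tt n = 2 ^ n * Sfun n / (n.factorial : ℚ) := by
  intro n
  induction n using Nat.strong_induction_on with
  | _ n ih =>
    match n with
    | 0 => rw [Tt_zero]; simp [Sfun]
    | m + 1 =>
      rw [Tt_succ]
      have hsum : ∑ i ∈ range (m + 1), Tt i * Tt (m - i)
          = (2 ^ m / (m.factorial : ℚ)) *
            ∑ i ∈ range (m + 1), (m.choose i : ℚ) * (Sfun i * Sfun (m - i)) := by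
        rw [Finset.mul_sum]
        refine Finset.sum_congr rfl fun i hi ↦ ?_
        have hi' := mem_range.mp hi
        rw [ih i (by omega), ih (m - i) (by omega)]
        have hch : (m.choose i : ℚ)
            = (m.factorial : ℚ) / ((i.factorial : ℚ) * ((m - i).factorial : ℚ)) :=
          Nat.cast_choose ℚ (by omega)
        have hf1 : (i.factorial : ℚ) ≠ 0 := Nat.cast_ne_zero.mpr i.factorial_ne_zero
        have hf2 : ((m - i).factorial : ℚ) ≠ 0 := Nat.cast_ne_zero.mpr (m - i).factorial_ne_zero
        have hf3 : (m.factorial : ℚ) ≠ 0 := Nat.cast_ne_zero.mpr m.factorial_ne_zero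
        rw [hch, show (2:ℚ) ^ m = 2 ^ i * 2 ^ (m - i) by rw [← pow_add]; congr 1; omega]
        field_simp
      match m with
      | 0 =>
        rw [Finset.sum_range_one, Tt_zero]
        simp [Sfun]
        norm_num
      | m' + 1 =>
        rw [hsum, conv_abel m']
        have hS : Sfun (m' + 1 + 1) = (((m' : ℚ)) + 3) ^ (m' + 1) := by
          unfold Sfun
          push_cast
          norm_num
          ring_nf
        rw [hS]
        have hp : ((m' : ℚ) + 3) ^ (m' + 1) = ((m' : ℚ) + 3) ^ m' * ((m' : ℚ) + 3) :=
          pow_succ _ _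
        have hf : ((m' + 1 + 1).factorial : ℚ)
            = ((m' : ℚ) + 2) * ((m' + 1).factorial : ℚ) := by
          rw [Nat.factorial_succ]
          push_cast
          ring
        have hf3 : ((m' + 1).factorial : ℚ) ≠ 0 := Nat.cast_ne_zero.mpr (m' + 1).factorial_ne_zero
        have h2 : ((m' : ℚ) + 2) ≠ 0 := by positivity
        rw [hp, hf]
        have hcast : ((m' + 1 + 1 : ℕ) : ℚ) = (m' : ℚ) + 2 := by push_cast; ring
        rw [hcast]
        field_simp
        ring

/-- **Postnikov's identity.** For every positive integer `n`,
`(n+1)^(n-1) = Σ_b (n!/2^n) Π_{v ∈ V(b)} (1 + 1/h(v))`, where `b` ranges over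
unlabeled binary trees on `n` vertices and `h(v)` is the number of descendants of `v`. -/
theorem postnikov (n : ℕ) (hn : 0 < n) :
    ((n + 1) ^ (n - 1) : ℚ) =
      ∑ b ∈ treesOfSize n, ((n.factorial : ℚ) / 2 ^ n) *
        ∏ v ∈ b.verts, (1 + 1 / ((b.sub v).size : ℚ)) := by
  have hrw : (∑ b ∈ treesOfSize n, ((n.factorial : ℚ) / 2 ^ n) *
        ∏ v ∈ b.verts, (1 + 1 / ((b.sub v).size : ℚ)))
      = ((n.factorial : ℚ) / 2 ^ n) * Tt n := by
    rw [Tt, Finset.mul_sum]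
    rfl
  rw [hrw, Tt_eq n]
  unfold Sfun
  have hf : (n.factorial : ℚ) ≠ 0 := Nat.cast_ne_zero.mpr n.factorial_ne_zero
  have h2 : (2 : ℚ) ^ n ≠ 0 := by positivity
  field_simp
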